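/- For all even integers q ≥ 4 and real d > 0, setting t = 1 - 2/q and h₁ = e^{4d/q}, the function f(x) = ((x+t)/(tx+1))^d satisfies f(h₁) < h₁, provided q ≥ 4 (so t ≥ 1/2). -/

import Mathlib

open Real

theorem stmt_1 (q : ℕ) (hq4 : 4 ≤ q) (hqe : Even q) (d : ℝ) (hd : 0 < d)
    (t h₁ : ℝ) (ht : t = 1 - 2 / q) (hh : h₁ = Real.exp (4 * d / q)) :
    ((h₁ + t) / (t * h₁ + 1)) ^ d < h₁ := by
  have hq : (4:ℝ) ≤ (q:ℝ) := by exact_mod_cast hq4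
  have hq0 : (0:ℝ) < (q:ℝ) := by linarith
  have h2q : 2 / (q:ℝ) ≤ 1/2 := by
    rw [div_le_div_iff₀ hq0 (by norm_num)]; linarith
  have h2q0 : 0 < 2 / (q:ℝ) := by positivity
  have ht2 : 1/2 ≤ t := by rw [ht]; linarith
  have ht1 : t < 1 := by rw [ht]; linarith
  have hh1 : 1 < h₁ := by
    rw [hh]
    have := Real.exp_lt_exp.mpr (show (0:ℝ) < 4*d/(q:ℝ) by positivity)
    simpa using this
  have hD : 0 < t * h₁ + 1 := by nlinarith
  have hL : (1 - t) * (q:ℝ) = 2 := by rw [ht]; field_simp; ring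
  have hLh : (1 - t) * (q:ℝ) * h₁ = 2 * h₁ := by rw [hL]
  have hth : h₁ / 2 ≤ t * h₁ := by nlinarith
  have hr1 : 1 < (h₁ + t) / (t * h₁ + 1) := by
    rw [lt_div_iff₀ hD]; nlinarith
  have hr4 : (h₁ + t) / (t * h₁ + 1) - 1 ≤ 4 / (q:ℝ) := by
    rw [div_sub_one hD.ne', div_le_div_iff₀ hD hq0]
    nlinarith [hL, hLh, hth, hh1]
  have hlog : Real.log ((h₁ + t) / (t * h₁ + 1)) < 4 / (q:ℝ) :=
    lt_of_lt_of_le (Real.log_lt_sub_one_of_pos (by linarith) (by linarith)) hr4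
  have hpos : 0 < (h₁ + t) / (t * h₁ + 1) := by linarith
  have hmul : Real.log ((h₁ + t) / (t * h₁ + 1)) * d < 4 * d / (q:ℝ) := by
    have := mul_lt_mul_of_pos_right hlog hd
    calc Real.log ((h₁ + t) / (t * h₁ + 1)) * d < 4 / (q:ℝ) * d := this
      _ = 4 * d / (q:ℝ) := by ring
  rw [Real.rpow_def_of_pos hpos]
  have hfin := Real.exp_lt_exp.mpr hmul
  rwa [← hh] at hfin
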